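/- Let a < b be real numbers, let f : ℝ → ℝ be continuous, let u : ℝ × [a,b] → ℝ be such that the partial derivative ∂_t u exists and is jointly continuous, and let f^num_L, f^num_R : ℝ → ℝ be given functions of time with f^num_L(t) = f^num_R(t) for all t (periodic boundary conditions, where both boundary fluxes equal f^num(u_R, u_L)). Let V be a set of continuously differentiable functions v : [a,b] → ℝ containing the constant function 1, and assume that for every time t and every v ∈ V the weak-form equation ∫_a^b ∂_t u(t,x) v(x) dx − ∫_a^b f(u(t,x)) v'(x) dx + f^num_R(t) v(b) − f^num_L(t) v(a) = 0 holds. Then the total mass t ↦ ∫_a^b u(t,x) dx is constant in time. -/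

import Mathlib

set_option maxHeartbeats 1000000


/-- **Conservation of the weak RBF method with periodic boundary conditions.**
If, in addition to the hypotheses of the conservation theorem, the two
numerical boundary fluxes coincide (`f^num_L = f^num_R`, as for periodic
boundary conditions), then the total mass `t ↦ ∫_a^b u(t,x) dx` is constant
in time. -/
theorem weak_RBF_conservation_periodic
    (a b : ℝ) (hab : a < b)
    (f : ℝ → ℝ) (hf : Continuous f)
    (u ut : ℝ → ℝ → ℝ)
    (hut : ∀ t : ℝ, ∀ x ∈ Set.Icc a b, HasDerivAt (fun s => u s x) (ut t x) t)
    (hut_cont : ContinuousOn (fun p : ℝ × ℝ => ut p.1 p.2)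
      (Set.univ ×ˢ Set.Icc a b))
    (fnumL fnumR : ℝ → ℝ)
    (hperiodic : ∀ t : ℝ, fnumL t = fnumR t)
    (V : Set (ℝ → ℝ))
    (hV1 : (fun _ => (1 : ℝ)) ∈ V)
    (hVsmooth : ∀ v ∈ V, ContDiffOn ℝ 1 v (Set.Icc a b))
    (hweak : ∀ t : ℝ, ∀ v ∈ V,
      (∫ x in a..b, ut t x * v x)
        - (∫ x in a..b, f (u t x) * derivWithin v (Set.Icc a b) x)
        + fnumR t * v b - fnumL t * v a = 0) :
    ∀ s t : ℝ, (∫ x in a..b, u s x) = ∫ x in a..b, u t x := by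
  have huIcc : Set.uIcc a b = Set.Icc a b := Set.uIcc_of_le hab.le
  -- Step 0: the space integral of ut vanishes at every time
  have hzero : ∀ t : ℝ, (∫ x in a..b, ut t x) = 0 := by
    intro t
    have h := hweak t _ hV1
    have h2 : (∫ x in a..b, f (u t x) * derivWithin (fun _ => (1:ℝ)) (Set.Icc a b) x)
        = ∫ x in a..b, (0:ℝ) := by
      refine intervalIntegral.integral_congr ?_
      intro x hx
      rw [huIcc] at hx
      show f (u t x) * derivWithin (fun _ => (1:ℝ)) (Set.Icc a b) x = 0
      rw [(hasDerivWithinAt_const x (Set.Icc a b) (1:ℝ)).derivWithin ((uniqueDiffOn_Icc hab) x hx)]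
      ring
    simp only [mul_one] at h
    rw [h2, hperiodic t] at h
    simpa using h
  intro s t
  -- continuity of ut in time for fixed x in [a,b]
  have hcx : ∀ x ∈ Set.Icc a b, Continuous (fun τ => ut τ x) := by
    intro x hx
    rw [← continuousOn_univ]
    have : (fun τ => ut τ x) = (fun p : ℝ × ℝ => ut p.1 p.2) ∘ (fun τ => (τ, x)) := rfl
    rw [this]
    exact hut_cont.comp (continuous_id.prodMk continuous_const).continuousOn
      (fun τ _ => ⟨Set.mem_univ τ, hx⟩)
  set g : ℝ → ℝ := fun x => ∫ τ in t..s, ut τ x with hg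
  -- fundamental theorem of calculus
  have hfund : ∀ x ∈ Set.Icc a b, g x = u s x - u t x := by
    intro x hx
    exact intervalIntegral.integral_eq_sub_of_hasDerivAt
      (fun τ _ => hut τ x hx) ((hcx x hx).intervalIntegrable t s)
  -- integrability of ut on a compact rectangle
  have hrect : MeasureTheory.IntegrableOn (fun p : ℝ × ℝ => ut p.1 p.2)
      (Set.uIcc t s ×ˢ Set.Icc a b) := by
    exact (hut_cont.mono (Set.prod_mono (Set.subset_univ _) subset_rfl)).integrableOn_compact
      (isCompact_uIcc.prod isCompact_Icc)
  have hrect' : MeasureTheory.Integrable (fun p : ℝ × ℝ => ut p.1 p.2)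
      ((MeasureTheory.volume.restrict (Set.uIoc t s)).prod
        (MeasureTheory.volume.restrict (Set.Ioc a b))) := by
    rw [MeasureTheory.Measure.prod_restrict, ← MeasureTheory.Measure.volume_eq_prod]
    exact hrect.mono_set (Set.prod_mono Set.uIoc_subset_uIcc Set.Ioc_subset_Icc_self)
  -- integrability of g on [a,b]
  have hgI : IntervalIntegrable g MeasureTheory.volume a b := by
    rw [intervalIntegrable_iff_integrableOn_Ioc_of_le hab.le]
    have h1 : MeasureTheory.Integrable
        (fun x => ∫ τ in Set.uIoc t s, ut τ x) (MeasureTheory.volume.restrict (Set.Ioc a b)) :=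
      hrect'.integral_prod_right
    have : g = fun x => (if t ≤ s then (1:ℝ) else -1) • ∫ τ in Set.uIoc t s, ut τ x := by
      funext x
      rw [hg]
      exact intervalIntegral.intervalIntegral_eq_integral_uIoc _ _ _ _
    rw [this]
    simp only [smul_eq_mul]
    exact h1.const_mul _
  -- the integral of g over [a,b] vanishes (Fubini + step 0)
  have hg0 : (∫ x in a..b, g x) = 0 := by
    have hswap : (∫ x in Set.Ioc a b, ∫ τ in Set.uIoc t s, ut τ x) =
        ∫ τ in Set.uIoc t s, ∫ x in Set.Ioc a b, ut τ x := by
      refine MeasureTheory.integral_integral_swap ?_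
      have := (hrect'.swap)
      exact this
    have hinner : ∀ τ : ℝ, (∫ x in Set.Ioc a b, ut τ x) = 0 := by
      intro τ
      have := hzero τ
      rwa [intervalIntegral.integral_of_le hab.le] at this
    rw [intervalIntegral.integral_of_le hab.le]
    have : (∫ x in Set.Ioc a b, g x) =
        ∫ x in Set.Ioc a b, (if t ≤ s then (1:ℝ) else -1) • ∫ τ in Set.uIoc t s, ut τ x := by
      refine MeasureTheory.integral_congr_ae (Filter.Eventually.of_forall ?_)
      intro x
      exact intervalIntegral.intervalIntegral_eq_integral_uIoc _ _ _ _
    rw [this, MeasureTheory.integral_smul, hswap]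
    simp [hinner]
  -- conclude, splitting on integrability of u t
  by_cases hI : IntervalIntegrable (fun x => u t x) MeasureTheory.volume a b
  · have hcongr : (∫ x in a..b, u s x) = ∫ x in a..b, (u t x + g x) := by
      refine intervalIntegral.integral_congr ?_
      intro x hx
      rw [huIcc] at hx
      show u s x = u t x + g x
      rw [hfund x hx]; ring
    rw [hcongr, intervalIntegral.integral_add hI hgI, hg0, add_zero]
  · have hns : ¬ IntervalIntegrable (fun x => u s x) MeasureTheory.volume a b := by
      intro h
      apply hI
      have hsub := h.sub hgI
      refine hsub.congr ?_
      intro x hx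
      have hx' : x ∈ Set.Icc a b := by
        rw [Set.uIoc_of_le hab.le] at hx
        exact Set.Ioc_subset_Icc_self hx
      simp only [hfund x hx']
      ring
    rw [intervalIntegral.integral_undef hns, intervalIntegral.integral_undef hI]
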